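/- A category C with an ordinal degree function on its objects is a Reedy category (in Kan's sense, with the subcategories of degree-raising and degree-lowering morphisms given as data) if and only if C is an almost-Reedy category and the classes C⃗ (basic degree-nondecreasing morphisms) and C⃖ (basic degree-nonincreasing morphisms) are closed under composition. -/

import Mathlib

open CategoryTheory Category

universe w v u

variable {C : Type u} [Category.{v} C]

/-- A fundamental factorization of `f : x ⟶ y`: a factorization through an
object of degree strictly smaller than the degrees of both `x` and `y`. -/
structure FdFact (deg : C → Ordinal.{w}) {x y : C} (f : x ⟶ y) where
  z : C
  g : x ⟶ z
  h : z ⟶ y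
  fac : g ≫ h = f
  lt_src : deg z < deg x
  lt_tgt : deg z < deg y

/-- A morphism is basic if it admits no fundamental factorization. -/
def Basic (deg : C → Ordinal.{w}) {x y : C} (f : x ⟶ y) : Prop :=
  IsEmpty (FdFact deg f)

/-- A connecting morphism between two fundamental factorizations of `f`. -/
def FdConn (deg : C → Ordinal.{w}) {x y : C} {f : x ⟶ y}
    (F F' : FdFact deg f) : Prop :=
  ∃ k : F.z ⟶ F'.z, F.g ≫ k = F'.g ∧ k ≫ F'.h = F.h

/-- Two fundamental factorizations are connected by a zigzag of connecting
morphisms. -/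
def FdZigzag (deg : C → Ordinal.{w}) {x y : C} {f : x ⟶ y} :
    FdFact deg f → FdFact deg f → Prop :=
  Relation.ReflTransGen (fun F F' => FdConn deg F F' ∨ FdConn deg F' F)

/-- `C` (with the degree function `deg`) is almost-Reedy: the basic level
morphisms are exactly the identities, and the category of fundamental
factorizations of any (non-basic) morphism is connected. -/
def AlmostReedy (deg : C → Ordinal.{w}) : Prop :=
  (∀ x : C, Basic deg (𝟙 x)) ∧
  (∀ ⦃x y : C⦄ (f : x ⟶ y), deg x = deg y → Basic deg f → x = y ∧ HEq f (𝟙 x)) ∧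
  (∀ ⦃x y : C⦄ (f : x ⟶ y) (F F' : FdFact deg f), FdZigzag deg F F')

/-- The class `C⃖` of basic morphisms that non-strictly lower degree. -/
def Lowering (deg : C → Ordinal.{w}) {x y : C} (f : x ⟶ y) : Prop :=
  Basic deg f ∧ deg y ≤ deg x

/-- The class `C⃗` of basic morphisms that non-strictly raise degree. -/
def Raising (deg : C → Ordinal.{w}) {x y : C} (f : x ⟶ y) : Prop :=
  Basic deg f ∧ deg x ≤ deg y

/-- Kan's notion of Reedy category, with the subcategories `P = C⃗` (raising)
and `Mi = C⃖` (lowering) given as data: both are wide subcategories, nonidentity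
`P`-morphisms strictly raise degree, nonidentity `Mi`-morphisms strictly lower
degree, and every morphism factors uniquely as a `Mi`-morphism followed by a
`P`-morphism. -/
def IsReedyWith (deg : C → Ordinal.{w}) (P Mi : MorphismProperty C) : Prop :=
  (∀ x : C, P (𝟙 x)) ∧ (∀ x : C, Mi (𝟙 x)) ∧
  (∀ ⦃x y z : C⦄ (f : x ⟶ y) (g : y ⟶ z), P f → P g → P (f ≫ g)) ∧
  (∀ ⦃x y z : C⦄ (f : x ⟶ y) (g : y ⟶ z), Mi f → Mi g → Mi (f ≫ g)) ∧
  (∀ ⦃x y : C⦄ (f : x ⟶ y), P f → deg x < deg y ∨ (x = y ∧ HEq f (𝟙 x))) ∧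
  (∀ ⦃x y : C⦄ (f : x ⟶ y), Mi f → deg y < deg x ∨ (x = y ∧ HEq f (𝟙 x))) ∧
  (∀ ⦃x y : C⦄ (f : x ⟶ y), ∃ (z : C) (g : x ⟶ z) (h : z ⟶ y),
    Mi g ∧ P h ∧ g ≫ h = f ∧
      ∀ (z' : C) (g' : x ⟶ z') (h' : z' ⟶ y), Mi g' → P h' → g' ≫ h' = f →
        z = z' ∧ HEq g g' ∧ HEq h h')


section Aux

variable (deg : C → Ordinal.{w})

/-- Raw "derived factorization" data: `(z, g, h)` is obtained from the
factorization `gF ≫ hF` by factoring `gF`, `hF` and the middle map. -/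
def Der {x y zF : C} (gF : x ⟶ zF) (hF : zF ⟶ y)
    (z : C) (g : x ⟶ z) (h : z ⟶ y) : Prop :=
  ∃ (w w' : C) (g₁ : x ⟶ w) (g₂ : w ⟶ zF) (h₁ : zF ⟶ w') (h₂ : w' ⟶ y)
    (m₁ : w ⟶ z) (m₂ : z ⟶ w'),
    Lowering deg g₁ ∧ Raising deg g₂ ∧ g₁ ≫ g₂ = gF ∧
    Lowering deg h₁ ∧ Raising deg h₂ ∧ h₁ ≫ h₂ = hF ∧
    Lowering deg m₁ ∧ Raising deg m₂ ∧ m₁ ≫ m₂ = g₂ ≫ h₁ ∧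
    g = g₁ ≫ m₁ ∧ h = m₂ ≫ h₂

variable {deg}

lemma lr_exists (hAR : AlmostReedy deg)
    (hRc : ∀ ⦃x y z : C⦄ (f : x ⟶ y) (g : y ⟶ z),
      Raising deg f → Raising deg g → Raising deg (f ≫ g))
    (hLc : ∀ ⦃x y z : C⦄ (f : x ⟶ y) (g : y ⟶ z),
      Lowering deg f → Lowering deg g → Lowering deg (f ≫ g)) :
    ∀ (o : Ordinal.{w}) ⦃x y : C⦄ (f : x ⟶ y), min (deg x) (deg y) ≤ o →
      ∃ (z : C) (g : x ⟶ z) (h : z ⟶ y),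
        Lowering deg g ∧ Raising deg h ∧ g ≫ h = f := by
  intro o
  induction o using Ordinal.induction with
  | h o IH =>
  intro x y f hmin
  by_cases hb : Basic deg f
  · rcases le_total (deg x) (deg y) with hxy | hxy
    · exact ⟨x, 𝟙 x, f, ⟨hAR.1 x, le_rfl⟩, ⟨hb, hxy⟩, id_comp f⟩
    · exact ⟨y, f, 𝟙 y, ⟨hb, hxy⟩, ⟨hAR.1 y, le_rfl⟩, comp_id f⟩
  · rw [Basic, not_isEmpty_iff] at hb
    obtain ⟨⟨z, g, h, fac, l1, l2⟩⟩ := hb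
    have hzo : deg z < o := lt_of_lt_of_le (lt_min l1 l2) hmin
    obtain ⟨w, g₁, g₂, lg, rg, facg⟩ := IH (deg z) hzo g (min_le_right _ _)
    obtain ⟨w', h₁, h₂, lh, rh, fach⟩ := IH (deg z) hzo h (min_le_left _ _)
    obtain ⟨v, m₁, m₂, lm, rm, facm⟩ :=
      IH (deg z) hzo (g₂ ≫ h₁) ((min_le_left _ _).trans rg.2)
    refine ⟨v, g₁ ≫ m₁, m₂ ≫ h₂, hLc _ _ lg lm, hRc _ _ rm rh, ?_⟩
    rw [assoc, ← assoc m₁ m₂ h₂, facm, assoc g₂ h₁ h₂, fach, ← assoc,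
      facg, fac]

lemma der_exists (hAR : AlmostReedy deg)
    (hRc : ∀ ⦃x y z : C⦄ (f : x ⟶ y) (g : y ⟶ z),
      Raising deg f → Raising deg g → Raising deg (f ≫ g))
    (hLc : ∀ ⦃x y z : C⦄ (f : x ⟶ y) (g : y ⟶ z),
      Lowering deg f → Lowering deg g → Lowering deg (f ≫ g))
    {x y zF : C} (gF : x ⟶ zF) (hF : zF ⟶ y) :
    ∃ (z : C) (g : x ⟶ z) (h : z ⟶ y), Der deg gF hF z g h := by
  obtain ⟨w, g₁, g₂, lg, rg, facg⟩ := lr_exists hAR hRc hLc _ gF le_rfl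
  obtain ⟨w', h₁, h₂, lh, rh, fach⟩ := lr_exists hAR hRc hLc _ hF le_rfl
  obtain ⟨v, m₁, m₂, lm, rm, facm⟩ := lr_exists hAR hRc hLc _ (g₂ ≫ h₁) le_rfl
  exact ⟨v, g₁ ≫ m₁, m₂ ≫ h₂, w, w', g₁, g₂, h₁, h₂, m₁, m₂,
    lg, rg, facg, lh, rh, fach, lm, rm, facm, rfl, rfl⟩

lemma der_self (hAR : AlmostReedy deg) {x y z : C} {g : x ⟶ z} {h : z ⟶ y}
    (lg : Lowering deg g) (rh : Raising deg h) :
    Der deg g h z g h :=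
  ⟨z, z, g, 𝟙 z, 𝟙 z, h, 𝟙 z, 𝟙 z,
    lg, ⟨hAR.1 z, le_rfl⟩, comp_id g, ⟨hAR.1 z, le_rfl⟩, rh, id_comp h,
    ⟨hAR.1 z, le_rfl⟩, ⟨hAR.1 z, le_rfl⟩, rfl, (comp_id g).symm, (id_comp h).symm⟩

lemma der_key (hAR : AlmostReedy deg)
    (hRc : ∀ ⦃x y z : C⦄ (f : x ⟶ y) (g : y ⟶ z),
      Raising deg f → Raising deg g → Raising deg (f ≫ g))
    (hLc : ∀ ⦃x y z : C⦄ (f : x ⟶ y) (g : y ⟶ z),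
      Lowering deg f → Lowering deg g → Lowering deg (f ≫ g))
    (o : Ordinal.{w})
    (IH : ∀ o' < o, ∀ ⦃x y : C⦄ (f : x ⟶ y), min (deg x) (deg y) ≤ o' →
      ∀ ⦃z : C⦄ (g : x ⟶ z) (h : z ⟶ y) ⦃z' : C⦄ (g' : x ⟶ z') (h' : z' ⟶ y),
        Lowering deg g → Raising deg h → g ≫ h = f →
        Lowering deg g' → Raising deg h' → g' ≫ h' = f →
        z = z' ∧ HEq g g' ∧ HEq h h')
    {x y zF zF' : C} {gF : x ⟶ zF} {hF : zF ⟶ y} {gF' : x ⟶ zF'} {hF' : zF' ⟶ y}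
    (hzF : deg zF < o) (hzF' : deg zF' < o)
    (k : zF ⟶ zF') (hk1 : gF ≫ k = gF') (hk2 : k ≫ hF' = hF)
    {z : C} {g : x ⟶ z} {h : z ⟶ y} {z' : C} {g' : x ⟶ z'} {h' : z' ⟶ y}
    (hD : Der deg gF hF z g h) (hD' : Der deg gF' hF' z' g' h') :
    z = z' ∧ HEq g g' ∧ HEq h h' := by
  obtain ⟨w, w', g₁, g₂, h₁, h₂, m₁, m₂, lg₁, rg₂, facg, lh₁, rh₂, fach,
    lm₁, rm₂, facm, hg, hh⟩ := hD
  obtain ⟨w₂, w₂', a₁, a₂, b₁, b₂, n₁, n₂, la₁, ra₂, faca, lb₁, rb₂, facb,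
    ln₁, rn₂, facn, hg', hh'⟩ := hD'
  -- factor g₂ ≫ k
  obtain ⟨u, p, q, lp, rq, facpq⟩ := lr_exists hAR hRc hLc _ (g₂ ≫ k) le_rfl
  obtain ⟨ew, ea₁, ea₂⟩ := IH (deg zF') hzF' gF' (min_le_right _ _)
    a₁ a₂ (g₁ ≫ p) q la₁ ra₂ faca (hLc _ _ lg₁ lp) rq
    (by rw [assoc, facpq, ← assoc, facg, hk1])
  subst ew
  have ea₁' : a₁ = g₁ ≫ p := eq_of_heq ea₁
  have ea₂' : a₂ = q := eq_of_heq ea₂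
  rw [← ea₂'] at facpq
  -- factor k ≫ b₁
  obtain ⟨t, c, d, lc, rd, faccd⟩ := lr_exists hAR hRc hLc _ (k ≫ b₁) le_rfl
  obtain ⟨ew', eh₁, eh₂⟩ := IH (deg zF) hzF hF (min_le_left _ _)
    h₁ h₂ c (d ≫ b₂) lh₁ rh₂ fach lc (hRc _ _ rd rb₂)
    (by rw [← assoc, faccd, assoc, facb, hk2])
  subst ew'
  have eh₁' : h₁ = c := eq_of_heq eh₁
  have eh₂' : h₂ = d ≫ b₂ := eq_of_heq eh₂
  rw [← eh₁'] at faccd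
  -- middle map
  obtain ⟨ez, em, em'⟩ := IH (deg zF) hzF (g₂ ≫ (k ≫ b₁))
    ((min_le_left _ _).trans rg₂.2)
    m₁ (m₂ ≫ d) (p ≫ n₁) n₂ lm₁ (hRc _ _ rm₂ rd)
    (by rw [← assoc, facm, assoc, faccd])
    (hLc _ _ lp ln₁) rn₂
    (by rw [assoc, facn, ← assoc, facpq, assoc])
  subst ez
  refine ⟨rfl, heq_of_eq ?_, heq_of_eq ?_⟩
  · rw [hg, eq_of_heq em, hg', ea₁', assoc]
  · rw [hh, eh₂', hh', ← eq_of_heq em', assoc]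

lemma lr_unique (hAR : AlmostReedy deg)
    (hRc : ∀ ⦃x y z : C⦄ (f : x ⟶ y) (g : y ⟶ z),
      Raising deg f → Raising deg g → Raising deg (f ≫ g))
    (hLc : ∀ ⦃x y z : C⦄ (f : x ⟶ y) (g : y ⟶ z),
      Lowering deg f → Lowering deg g → Lowering deg (f ≫ g)) :
    ∀ (o : Ordinal.{w}) ⦃x y : C⦄ (f : x ⟶ y), min (deg x) (deg y) ≤ o →
      ∀ ⦃z : C⦄ (g : x ⟶ z) (h : z ⟶ y) ⦃z' : C⦄ (g' : x ⟶ z') (h' : z' ⟶ y),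
        Lowering deg g → Raising deg h → g ≫ h = f →
        Lowering deg g' → Raising deg h' → g' ≫ h' = f →
        z = z' ∧ HEq g g' ∧ HEq h h' := by
  intro o
  induction o using Ordinal.induction with
  | h o IH =>
  intro x y f hmin z g h z' g' h' lg rh fac lg' rh' fac'
  by_cases hb : Basic deg f
  · -- basic case : each factorization degenerates
    have cases1 : ∀ ⦃zz : C⦄ (gg : x ⟶ zz) (hh : zz ⟶ y),
        Lowering deg gg → Raising deg hh → gg ≫ hh = f →
        deg zz = deg x ∨ deg zz = deg y := by
      intro zz gg hh lgg rhh facc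
      by_contra hcon
      push_neg at hcon
      exact hb.false ⟨zz, gg, hh, facc, lt_of_le_of_ne lgg.2 hcon.1,
        lt_of_le_of_ne rhh.2 hcon.2⟩
    rcases cases1 g h lg rh fac with e1 | e1
    · obtain ⟨exz, heg⟩ := hAR.2.1 g e1.symm lg.1
      subst exz
      have hgf : h = f := by rw [← fac, eq_of_heq heg, id_comp]
      rcases cases1 g' h' lg' rh' fac' with e2 | e2
      · obtain ⟨exz', heg'⟩ := hAR.2.1 g' e2.symm lg'.1
        subst exz'
        have hgf' : h' = f := by rw [← fac', eq_of_heq heg', id_comp]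
        exact ⟨rfl, heq_of_eq (by rw [eq_of_heq heg, eq_of_heq heg']),
          heq_of_eq (by rw [hgf, hgf'])⟩
      · obtain ⟨ezy, heh'⟩ := hAR.2.1 h' e2 rh'.1
        have ezy' := ezy.symm
        subst ezy'
        have hgf' : g' = f := by rw [← fac', eq_of_heq heh', comp_id]
        have exy : deg x = deg y := le_antisymm rh.2 lg'.2
        obtain ⟨exey, hef⟩ := hAR.2.1 f exy hb
        subst exey
        refine ⟨rfl, heq_of_eq ?_, heq_of_eq ?_⟩
        · rw [eq_of_heq heg, hgf', eq_of_heq hef]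
        · rw [hgf, eq_of_heq hef, eq_of_heq heh']
    · obtain ⟨ezy, heh⟩ := hAR.2.1 h e1 rh.1
      have ezy' := ezy.symm
      subst ezy'
      have hgf : g = f := by rw [← fac, eq_of_heq heh, comp_id]
      rcases cases1 g' h' lg' rh' fac' with e2 | e2
      · obtain ⟨exz', heg'⟩ := hAR.2.1 g' e2.symm lg'.1
        subst exz'
        have hgf' : h' = f := by rw [← fac', eq_of_heq heg', id_comp]
        have exy : deg x = deg y := le_antisymm rh'.2 lg.2
        obtain ⟨exey, hef⟩ := hAR.2.1 f exy hb
        subst exey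
        refine ⟨rfl, heq_of_eq ?_, heq_of_eq ?_⟩
        · rw [hgf, eq_of_heq hef, eq_of_heq heg']
        · rw [eq_of_heq heh, hgf', eq_of_heq hef]
      · obtain ⟨ezy2, heh'⟩ := hAR.2.1 h' e2 rh'.1
        have ezy2' := ezy2.symm
        subst ezy2'
        have hgf' : g' = f := by rw [← fac', eq_of_heq heh', comp_id]
        exact ⟨rfl, heq_of_eq (by rw [hgf, hgf']),
          heq_of_eq (by rw [eq_of_heq heh, eq_of_heq heh'])⟩
  · -- non-basic case
    have hzx : deg z < deg x := by
      rcases lt_or_eq_of_le lg.2 with hlt | heq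
      · exact hlt
      · exfalso
        obtain ⟨exz, heg⟩ := hAR.2.1 g heq.symm lg.1
        subst exz
        rw [eq_of_heq heg, id_comp] at fac
        exact hb (fac ▸ rh.1)
    have hzy : deg z < deg y := by
      rcases lt_or_eq_of_le rh.2 with hlt | heq
      · exact hlt
      · exfalso
        obtain ⟨ezy, heh⟩ := hAR.2.1 h heq rh.1
        subst ezy
        rw [eq_of_heq heh, comp_id] at fac
        exact hb (fac ▸ lg.1)
    have hzx' : deg z' < deg x := by
      rcases lt_or_eq_of_le lg'.2 with hlt | heq
      · exact hlt
      · exfalso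
        obtain ⟨exz, heg⟩ := hAR.2.1 g' heq.symm lg'.1
        subst exz
        rw [eq_of_heq heg, id_comp] at fac'
        exact hb (fac' ▸ rh'.1)
    have hzy' : deg z' < deg y := by
      rcases lt_or_eq_of_le rh'.2 with hlt | heq
      · exact hlt
      · exfalso
        obtain ⟨ezy, heh⟩ := hAR.2.1 h' heq rh'.1
        subst ezy
        rw [eq_of_heq heh, comp_id] at fac'
        exact hb (fac' ▸ lg'.1)
    set F : FdFact deg f := ⟨z, g, h, fac, hzx, hzy⟩ with hF
    set F' : FdFact deg f := ⟨z', g', h', fac', hzx', hzy'⟩ with hF'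
    have hbound : ∀ G : FdFact deg f, deg G.z < o := fun G =>
      lt_of_lt_of_le (lt_min G.lt_src G.lt_tgt) hmin
    have main : ∀ F₁ : FdFact deg f, FdZigzag deg F F₁ →
        ∀ ⦃zz : C⦄ (gg : x ⟶ zz) (hh : zz ⟶ y), Der deg F₁.g F₁.h zz gg hh →
          z = zz ∧ HEq g gg ∧ HEq h hh := by
      intro F₁ hzig
      induction hzig with
      | refl =>
        intro zz gg hh hD
        exact der_key hAR hRc hLc o IH (hbound F) (hbound F) (𝟙 F.z)
          (comp_id _) (id_comp _) (der_self hAR lg rh) hD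
      | @tail b c hstep hrel ih =>
        intro zz gg hh hD
        obtain ⟨zb, gb, hb2, hDb⟩ := der_exists hAR hRc hLc b.g b.h
        obtain ⟨e1, e2, e3⟩ := ih gb hb2 hDb
        rcases hrel with ⟨k, hk1, hk2⟩ | ⟨k, hk1, hk2⟩
        · obtain ⟨e1', e2', e3'⟩ := der_key hAR hRc hLc o IH (hbound b)
            (hbound c) k hk1 hk2 hDb hD
          exact ⟨e1.trans e1', e2.trans e2', e3.trans e3'⟩
        · obtain ⟨e1', e2', e3'⟩ := der_key hAR hRc hLc o IH (hbound c)
            (hbound b) k hk1 hk2 hD hDb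
          exact ⟨e1.trans e1'.symm, e2.trans e2'.symm, e3.trans e3'.symm⟩
    exact main F' (hAR.2.2 f F F') g' h' (der_self hAR lg' rh')

end Aux

/-- A category with an ordinal degree function is a Reedy category (for some
choice of raising and lowering subcategories) if and only if it is almost-Reedy
and the classes of basic non-strictly degree-raising and basic non-strictly
degree-lowering morphisms are closed under composition. -/
theorem isReedy_iff_almostReedy_and_closed (deg : C → Ordinal.{w}) :
    (∃ P Mi : MorphismProperty C, IsReedyWith deg P Mi) ↔
      (AlmostReedy deg ∧
        (∀ ⦃x y z : C⦄ (f : x ⟶ y) (g : y ⟶ z),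
          Raising deg f → Raising deg g → Raising deg (f ≫ g)) ∧
        (∀ ⦃x y z : C⦄ (f : x ⟶ y) (g : y ⟶ z),
          Lowering deg f → Lowering deg g → Lowering deg (f ≫ g))) := by
  constructor
  · rintro ⟨P, Mi, hRW⟩
    unfold IsReedyWith at hRW
    obtain ⟨hP1, hM1, hPc, hMc, hPd, hMd, hfac⟩ := hRW
    have hPle : ∀ ⦃x y : C⦄ (f : x ⟶ y), P f → deg x ≤ deg y := by
      intro x y f hf
      rcases hPd f hf with hlt | ⟨rfl, _⟩
      · exact hlt.le
      · exact le_rfl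
    have hMle : ∀ ⦃x y : C⦄ (f : x ⟶ y), Mi f → deg y ≤ deg x := by
      intro x y f hf
      rcases hMd f hf with hlt | ⟨rfl, _⟩
      · exact hlt.le
      · exact le_rfl
    have build : ∀ ⦃x y z : C⦄ (g : x ⟶ z) (h : z ⟶ y),
        ∃ (w w' v : C) (g₁ : x ⟶ w) (g₂ : w ⟶ z) (h₁ : z ⟶ w') (h₂ : w' ⟶ y)
          (m₁ : w ⟶ v) (m₂ : v ⟶ w'),
          Mi g₁ ∧ P g₂ ∧ g₁ ≫ g₂ = g ∧ Mi h₁ ∧ P h₂ ∧ h₁ ≫ h₂ = h ∧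
          Mi m₁ ∧ P m₂ ∧ m₁ ≫ m₂ = g₂ ≫ h₁ ∧ deg v ≤ deg z ∧
          Mi (g₁ ≫ m₁) ∧ P (m₂ ≫ h₂) ∧ (g₁ ≫ m₁) ≫ (m₂ ≫ h₂) = g ≫ h := by
      intro x y z g h
      obtain ⟨w, g₁, g₂, mg, pg, facg, -⟩ := hfac g
      obtain ⟨w', h₁, h₂, mh, ph, fach, -⟩ := hfac h
      obtain ⟨v, m₁, m₂, mm, pm, facm, -⟩ := hfac (g₂ ≫ h₁)
      refine ⟨w, w', v, g₁, g₂, h₁, h₂, m₁, m₂, mg, pg, facg, mh, ph, fach,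
        mm, pm, facm, le_trans (hMle m₁ mm) (hPle g₂ pg),
        hMc _ _ mg mm, hPc _ _ pm ph, ?_⟩
      rw [assoc, ← assoc m₁ m₂ h₂, facm, assoc g₂ h₁ h₂, fach, ← assoc, facg]
    have claimP : ∀ ⦃x y : C⦄ (f : x ⟶ y), P f → Basic deg f := by
      intro x y f hf
      refine ⟨fun F => ?_⟩
      obtain ⟨z, g, h, fac, l1, l2⟩ := F
      obtain ⟨w, w', v, g₁, g₂, h₁, h₂, m₁, m₂, -, -, -, -, -, -, -, -, -,
        hv, mgm, pmh, facv⟩ := build g h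
      obtain ⟨z₀, g₀, h₀, m₀, p₀, fac₀, uniq⟩ := hfac f
      obtain ⟨e1, -, -⟩ := uniq v (g₁ ≫ m₁) (m₂ ≫ h₂) mgm pmh (by rw [facv, fac])
      obtain ⟨e2, -, -⟩ := uniq x (𝟙 x) f (hM1 x) hf (id_comp f)
      have exv : x = v := e2.symm.trans e1
      have hlt : deg v < deg x := lt_of_le_of_lt hv l1
      rw [exv] at hlt
      exact absurd hlt (lt_irrefl _)
    have claimM : ∀ ⦃x y : C⦄ (f : x ⟶ y), Mi f → Basic deg f := by
      intro x y f hf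
      refine ⟨fun F => ?_⟩
      obtain ⟨z, g, h, fac, l1, l2⟩ := F
      obtain ⟨w, w', v, g₁, g₂, h₁, h₂, m₁, m₂, -, -, -, -, -, -, -, -, -,
        hv, mgm, pmh, facv⟩ := build g h
      obtain ⟨z₀, g₀, h₀, m₀, p₀, fac₀, uniq⟩ := hfac f
      obtain ⟨e1, -, -⟩ := uniq v (g₁ ≫ m₁) (m₂ ≫ h₂) mgm pmh (by rw [facv, fac])
      obtain ⟨e2, -, -⟩ := uniq y f (𝟙 y) hf (hP1 y) (comp_id f)
      have eyv : y = v := e2.symm.trans e1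
      have hlt : deg v < deg y := lt_of_le_of_lt hv l2
      rw [eyv] at hlt
      exact absurd hlt (lt_irrefl _)
    have A1 : ∀ x : C, Basic deg (𝟙 x) := fun x => claimP (𝟙 x) (hP1 x)
    have A2 : ∀ ⦃x y : C⦄ (f : x ⟶ y), deg x = deg y → Basic deg f →
        x = y ∧ HEq f (𝟙 x) := by
      intro x y f exy hb
      obtain ⟨z₀, g₀, h₀, m₀, p₀, fac₀, uniq⟩ := hfac f
      have hz : deg z₀ = deg x ∨ deg z₀ = deg y := by
        by_contra hc
        push_neg at hc
        exact hb.false ⟨z₀, g₀, h₀, fac₀, lt_of_le_of_ne (hMle g₀ m₀) hc.1,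
          lt_of_le_of_ne (hPle h₀ p₀) hc.2⟩
      rcases hz with e | e
      · rcases hMd g₀ m₀ with hlt | ⟨exz, hg0⟩
        · exact absurd hlt (by rw [e]; exact lt_irrefl _)
        · subst exz
          have hf : f = h₀ := by rw [← fac₀, eq_of_heq hg0, id_comp]
          rcases hPd h₀ p₀ with hlt | hid
          · rw [exy] at hlt
            exact absurd hlt (lt_irrefl _)
          · exact ⟨hid.1, by rw [hf]; exact hid.2⟩
      · rcases hPd h₀ p₀ with hlt | ⟨ezy, hh0⟩
        · exact absurd hlt (by rw [e]; exact lt_irrefl _)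
        · have ezy' := ezy.symm
          subst ezy'
          have hf : f = g₀ := by rw [← fac₀, eq_of_heq hh0, comp_id]
          rcases hMd g₀ m₀ with hlt | hid
          · rw [exy] at hlt
            exact absurd hlt (lt_irrefl _)
          · exact ⟨hid.1, by rw [hf]; exact hid.2⟩
    have A3 : ∀ ⦃x y : C⦄ (f : x ⟶ y) (F F' : FdFact deg f),
        FdZigzag deg F F' := by
      intro x y f F F'
      obtain ⟨z₀, g₀, h₀, m₀, p₀, fac₀, uniq⟩ := hfac f
      have hlt : deg z₀ < deg x ∧ deg z₀ < deg y := by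
        obtain ⟨w, w', v, g₁, g₂, h₁, h₂, m₁, m₂, -, -, -, -, -, -, -, -, -,
          hv, mgm, pmh, facv⟩ := build F.g F.h
        obtain ⟨e1, -, -⟩ := uniq v (g₁ ≫ m₁) (m₂ ≫ h₂) mgm pmh
          (by rw [facv, F.fac])
        have hle : deg z₀ ≤ deg F.z := by rw [e1]; exact hv
        exact ⟨lt_of_le_of_lt hle F.lt_src, lt_of_le_of_lt hle F.lt_tgt⟩
      have key : ∀ G : FdFact deg f,
          FdZigzag deg G ⟨z₀, g₀, h₀, fac₀, hlt.1, hlt.2⟩ := by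
        intro G
        obtain ⟨w, w', v, g₁, g₂, h₁, h₂, m₁, m₂, mg1, pg2, facg, mh1, ph2,
          fach, mm1, pm2, facm, hv, mgm, pmh, facv⟩ := build G.g G.h
        obtain ⟨e1, e2, e3⟩ := uniq v (g₁ ≫ m₁) (m₂ ≫ h₂) mgm pmh
          (by rw [facv, G.fac])
        subst e1
        have eg0 : g₀ = g₁ ≫ m₁ := eq_of_heq e2
        have eh0 : h₀ = m₂ ≫ h₂ := eq_of_heq e3
        have hw : deg w ≤ deg G.z := hPle g₂ pg2
        have fct : g₁ ≫ (g₂ ≫ G.h) = f := by rw [← assoc, facg, G.fac]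
        have c1 : FdConn deg (⟨w, g₁, g₂ ≫ G.h, fct,
            lt_of_le_of_lt hw G.lt_src, lt_of_le_of_lt hw G.lt_tgt⟩ :
            FdFact deg f) G := ⟨g₂, facg, rfl⟩
        have c2 : FdConn deg (⟨w, g₁, g₂ ≫ G.h, fct,
            lt_of_le_of_lt hw G.lt_src, lt_of_le_of_lt hw G.lt_tgt⟩ :
            FdFact deg f) ⟨z₀, g₀, h₀, fac₀, hlt.1, hlt.2⟩ :=
          ⟨m₁, eg0.symm, by show m₁ ≫ h₀ = g₂ ≫ G.h; rw [eh0, ← assoc, facm, assoc, fach]⟩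
        exact Relation.ReflTransGen.head (Or.inr c1)
          (Relation.ReflTransGen.single (Or.inl c2))
      have hsymm : Symmetric (fun (a b : FdFact deg f) =>
          FdConn deg a b ∨ FdConn deg b a) := fun a b hh => hh.symm
      exact (key F).trans ((@Relation.ReflTransGen.stdSymm _ _ ⟨fun a b hh => hsymm hh⟩).symm _ _ (key F'))
    have hAR : AlmostReedy deg := ⟨A1, A2, A3⟩
    have hPR : ∀ ⦃x y : C⦄ (f : x ⟶ y), Raising deg f → P f := by
      intro x y f hf
      obtain ⟨hb, hle⟩ := hf
      obtain ⟨z₀, g₀, h₀, m₀, p₀, fac₀, uniq⟩ := hfac f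
      have hz : deg z₀ = deg x ∨ deg z₀ = deg y := by
        by_contra hc
        push_neg at hc
        exact hb.false ⟨z₀, g₀, h₀, fac₀, lt_of_le_of_ne (hMle g₀ m₀) hc.1,
          lt_of_le_of_ne (hPle h₀ p₀) hc.2⟩
      have ex : deg z₀ = deg x := by
        rcases hz with e | e
        · exact e
        · exact le_antisymm (hMle g₀ m₀) (hle.trans e.symm.le)
      rcases hMd g₀ m₀ with hlt | ⟨exz, hg0⟩
      · exact absurd hlt (by rw [ex]; exact lt_irrefl _)
      · subst exz
        rw [show f = h₀ by rw [← fac₀, eq_of_heq hg0, id_comp]]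
        exact p₀
    have hML : ∀ ⦃x y : C⦄ (f : x ⟶ y), Lowering deg f → Mi f := by
      intro x y f hf
      obtain ⟨hb, hle⟩ := hf
      obtain ⟨z₀, g₀, h₀, m₀, p₀, fac₀, uniq⟩ := hfac f
      have hz : deg z₀ = deg x ∨ deg z₀ = deg y := by
        by_contra hc
        push_neg at hc
        exact hb.false ⟨z₀, g₀, h₀, fac₀, lt_of_le_of_ne (hMle g₀ m₀) hc.1,
          lt_of_le_of_ne (hPle h₀ p₀) hc.2⟩
      have ey : deg z₀ = deg y := by
        rcases hz with e | e
        · exact le_antisymm (hPle h₀ p₀) (hle.trans e.symm.le)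
        · exact e
      rcases hPd h₀ p₀ with hlt | ⟨ezy, hh0⟩
      · exact absurd hlt (by rw [ey]; exact lt_irrefl _)
      · have ezy' := ezy.symm
        subst ezy'
        rw [show f = g₀ by rw [← fac₀, eq_of_heq hh0, comp_id]]
        exact m₀
    refine ⟨hAR, ?_, ?_⟩
    · intro x y z f g hf hg
      exact ⟨claimP _ (hPc _ _ (hPR f hf) (hPR g hg)), hf.2.trans hg.2⟩
    · intro x y z f g hf hg
      exact ⟨claimM _ (hMc _ _ (hML f hf) (hML g hg)), hg.2.trans hf.2⟩
  · rintro ⟨hAR, hRc, hLc⟩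
    refine ⟨fun _ _ f => Raising deg f, fun _ _ f => Lowering deg f,
      fun x => ⟨hAR.1 x, le_rfl⟩, fun x => ⟨hAR.1 x, le_rfl⟩,
      hRc, hLc, ?_, ?_, ?_⟩
    · intro x y f hf
      rcases lt_or_eq_of_le hf.2 with hlt | heq
      · exact Or.inl hlt
      · exact Or.inr (hAR.2.1 f heq hf.1)
    · intro x y f hf
      rcases lt_or_eq_of_le hf.2 with hlt | heq
      · exact Or.inl hlt
      · exact Or.inr (hAR.2.1 f heq.symm hf.1)
    · intro x y f
      obtain ⟨z, g, h, lg, rh, fac⟩ := lr_exists hAR hRc hLc _ f le_rfl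
      exact ⟨z, g, h, lg, rh, fac, fun z' g' h' lg' rh' fac' =>
        lr_unique hAR hRc hLc _ f le_rfl g h g' h' lg rh fac lg' rh' fac'⟩
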